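/- For every $\epsilon \in (0,1)$ there exist a Borel probability measure $\mu$ on $[0,1]$ and a constant $C > 0$ such that for every dyadic interval $I \subset [0,1]$ with midpoint $c$ and every $\delta \in (0,1)$ one has $\mu([c - \delta|I|, c + \delta|I|] \cap [0,1]) \ge C \delta^{\epsilon} \mu(I)$. -/

import Mathlib

open MeasureTheory Set BoundedContinuousFunction

noncomputable section AuxSelfSimilar

/-- weights for the self-similar measure in base `b`: the last digit gets `1/2`,
the other `b-1` digits share the remaining `1/2`. -/
def wt (b d : ℕ) : ℝ := if d = b - 1 then 1/2 else 1/(2*((b:ℝ)-1))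

/-- clamp to `[0,1]` -/
def cl (x : ℝ) : ℝ := min (max x 0) 1

lemma one_le_cast_sub {b : ℕ} (hb : 2 ≤ b) : (1:ℝ) ≤ (b:ℝ) - 1 := by
  have : (2:ℝ) ≤ b := by exact_mod_cast hb
  linarith

lemma wt_pos {b : ℕ} (hb : 2 ≤ b) (d : ℕ) : 0 < wt b d := by
  have h1 := one_le_cast_sub hb
  unfold wt; split <;> positivity

lemma wt_le_half {b : ℕ} (hb : 2 ≤ b) (d : ℕ) : wt b d ≤ 1/2 := by
  have h1 := one_le_cast_sub hb
  unfold wt; split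
  · exact le_rfl
  · rw [div_le_div_iff₀ (by linarith) (by norm_num)]
    nlinarith

lemma q_le_wt {b : ℕ} (hb : 2 ≤ b) (d : ℕ) : 1/(2*((b:ℝ)-1)) ≤ wt b d := by
  have h1 := one_le_cast_sub hb
  unfold wt; split
  · rw [div_le_div_iff₀ (by linarith) (by norm_num)]
    nlinarith
  · exact le_rfl

lemma sum_wt {b : ℕ} (hb : 2 ≤ b) : ∑ d ∈ Finset.range b, wt b d = 1 := by
  obtain ⟨b', rfl⟩ : ∃ b', b = b' + 1 := ⟨b - 1, by omega⟩
  have hb' : 1 ≤ b' := by omega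
  have hb'R : (1:ℝ) ≤ (b':ℝ) := by exact_mod_cast hb'
  rw [Finset.sum_range_succ]
  have h1 : wt (b'+1) b' = 1/2 := by unfold wt; simp
  have h2 : ∀ d ∈ Finset.range b', wt (b'+1) d = 1/(2*(b':ℝ)) := by
    intro d hd
    have : d ≠ b' := by have := Finset.mem_range.mp hd; omega
    unfold wt
    simp only [Nat.add_sub_cancel, this, if_false]
    push_cast; ring_nf
  rw [Finset.sum_congr rfl h2, Finset.sum_const, h1, Finset.card_range, nsmul_eq_mul]
  have : (b':ℝ) ≠ 0 := by linarith
  field_simp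
  ring

lemma cl_mono : Monotone cl := fun x y h => by
  unfold cl; exact min_le_min (max_le_max h le_rfl) le_rfl

lemma continuous_cl : Continuous cl := (continuous_id.max continuous_const).min continuous_const

lemma cl_of_nonpos {x : ℝ} (h : x ≤ 0) : cl x = 0 := by
  unfold cl; rw [max_eq_right h, min_eq_left (by norm_num)]

lemma cl_of_one_le {x : ℝ} (h : 1 ≤ x) : cl x = 1 := by
  unfold cl; rw [max_eq_left (by linarith), min_eq_right h]

lemma cl_of_mem {x : ℝ} (h0 : 0 ≤ x) (h1 : x ≤ 1) : cl x = x := by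
  unfold cl; rw [max_eq_left h0, min_eq_left h1]

lemma cl_mem (x : ℝ) : cl x ∈ Icc (0:ℝ) 1 :=
  ⟨le_min (le_max_right _ _) (by norm_num), min_le_right _ _⟩

section FP
variable (b : ℕ)

/-- the affine digit map, clamped -/
def gmap (d : ℕ) : C(ℝ, ℝ) :=
  ⟨fun x => cl ((b:ℝ) * cl x - d),
    continuous_cl.comp ((continuous_const.mul (continuous_cl.comp continuous_id)).sub
      continuous_const)⟩

/-- the self-similarity operator -/
def G (F : ℝ →ᵇ ℝ) : ℝ →ᵇ ℝ := ∑ d ∈ Finset.range b, wt b d • F.compContinuous (gmap b d)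

lemma G_apply (F : ℝ →ᵇ ℝ) (x : ℝ) :
    G b F x = ∑ d ∈ Finset.range b, wt b d * F (cl ((b:ℝ) * cl x - d)) := by
  unfold G
  rw [coe_sum, Finset.sum_apply]
  simp [gmap, coe_smul, compContinuous_apply]

def SS : Set (ℝ →ᵇ ℝ) :=
  {F | (∀ x ≤ (0:ℝ), F x = 0) ∧ (∀ x, (1:ℝ) ≤ x → F x = 1) ∧ Monotone ⇑F}

lemma SS_closed : IsClosed SS := by
  have hA : IsClosed {F : ℝ →ᵇ ℝ | ∀ x ≤ (0:ℝ), F x = 0} := by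
    have h : {F : ℝ →ᵇ ℝ | ∀ x ≤ (0:ℝ), F x = 0}
        = ⋂ (x : ℝ) (_ : x ≤ 0), {F : ℝ →ᵇ ℝ | F x = 0} := by ext F; simp
    rw [h]
    exact isClosed_iInter fun x => isClosed_iInter fun _ =>
      isClosed_eq (continuous_eval_const x) continuous_const
  have hB : IsClosed {F : ℝ →ᵇ ℝ | ∀ x, (1:ℝ) ≤ x → F x = 1} := by
    have h : {F : ℝ →ᵇ ℝ | ∀ x, (1:ℝ) ≤ x → F x = 1}
        = ⋂ (x : ℝ) (_ : 1 ≤ x), {F : ℝ →ᵇ ℝ | F x = 1} := by ext F; simp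
    rw [h]
    exact isClosed_iInter fun x => isClosed_iInter fun _ =>
      isClosed_eq (continuous_eval_const x) continuous_const
  have hC : IsClosed {F : ℝ →ᵇ ℝ | Monotone ⇑F} := by
    have h : {F : ℝ →ᵇ ℝ | Monotone ⇑F}
        = ⋂ (p : ℝ × ℝ) (_ : p.1 ≤ p.2), {F : ℝ →ᵇ ℝ | F p.1 ≤ F p.2} := by
      ext F
      constructor
      · intro hF; simp only [mem_iInter]; intro p hp; exact hF hp
      · intro hF x y hxy
        have := mem_iInter.mp hF (x, y)
        exact mem_iInter.mp this hxy
    rw [h]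
    exact isClosed_iInter fun p => isClosed_iInter fun _ =>
      isClosed_le (continuous_eval_const p.1) (continuous_eval_const p.2)
  have hSS : SS = {F : ℝ →ᵇ ℝ | ∀ x ≤ (0:ℝ), F x = 0}
      ∩ ({F : ℝ →ᵇ ℝ | ∀ x, (1:ℝ) ≤ x → F x = 1} ∩ {F : ℝ →ᵇ ℝ | Monotone ⇑F}) := rfl
  rw [hSS]
  exact hA.inter (hB.inter hC)

variable {b} (hb : 2 ≤ b)

include hb in
lemma G_mem (F : ℝ →ᵇ ℝ) (hF : F ∈ SS) : G b F ∈ SS := by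
  obtain ⟨h0, h1, hm⟩ := hF
  refine ⟨?_, ?_, ?_⟩
  · intro x hx
    rw [G_apply]
    apply Finset.sum_eq_zero
    intro d hd
    rw [cl_of_nonpos hx]
    have : (b:ℝ) * 0 - d ≤ 0 := by simp
    rw [cl_of_nonpos this, h0 0 le_rfl, mul_zero]
  · intro x hx
    rw [G_apply]
    have : ∀ d ∈ Finset.range b, wt b d * F (cl ((b:ℝ) * cl x - d)) = wt b d := by
      intro d hd
      rw [cl_of_one_le hx]
      have hdb : (d:ℝ) ≤ (b:ℝ) - 1 := by
        have := Finset.mem_range.mp hd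
        have : (d:ℝ) + 1 ≤ b := by exact_mod_cast this
        linarith
      have : (1:ℝ) ≤ (b:ℝ) * 1 - d := by linarith
      rw [cl_of_one_le this, h1 1 le_rfl, mul_one]
    rw [Finset.sum_congr rfl this, sum_wt hb]
  · intro x y hxy
    rw [G_apply, G_apply]
    apply Finset.sum_le_sum
    intro d hd
    have hw := (wt_pos hb d).le
    apply mul_le_mul_of_nonneg_left _ hw
    apply hm
    apply cl_mono
    have h := cl_mono hxy
    have : (b:ℝ) * cl x ≤ (b:ℝ) * cl y :=
      mul_le_mul_of_nonneg_left h (by positivity)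
    linarith

include hb in
lemma G_contract (F₁ F₂ : ℝ →ᵇ ℝ) (h₁ : F₁ ∈ SS) (h₂ : F₂ ∈ SS) :
    dist (G b F₁) (G b F₂) ≤ (1/2) * dist F₁ F₂ := by
  rw [dist_le (by positivity)]
  intro x
  rw [Real.dist_eq, G_apply, G_apply, ← Finset.sum_sub_distrib]
  set u : ℝ := (b:ℝ) * cl x with hu
  have hu0 : 0 ≤ u := by
    have := (cl_mem x).1
    positivity
  set D : ℕ := ⌊u⌋₊ with hD
  have key : ∀ d ∈ Finset.range b, d ≠ D →
      wt b d * F₁ (cl (u - d)) - wt b d * F₂ (cl (u - d)) = 0 := by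
    intro d _ hdD
    rcases lt_or_gt_of_ne hdD with h | h
    · have : (1:ℝ) ≤ u - d := by
        have h1 : (d:ℝ) + 1 ≤ D := by exact_mod_cast h
        have h2 : (D:ℝ) ≤ u := Nat.floor_le hu0
        linarith
      rw [cl_of_one_le this, h₁.2.1 1 le_rfl, h₂.2.1 1 le_rfl]
      ring
    · have : u - d ≤ 0 := by
        have h1 : (D:ℝ) + 1 ≤ d := by exact_mod_cast h
        have h2 : u < (D:ℝ) + 1 := Nat.lt_floor_add_one u
        linarith
      rw [cl_of_nonpos this, h₁.1 0 le_rfl, h₂.1 0 le_rfl]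
      ring
  have hside : D ∉ Finset.range b → wt b D * F₁ (cl (u - D)) - wt b D * F₂ (cl (u - D)) = 0 := by
    intro hD'
    have hbD : b ≤ D := by
      by_contra h
      exact hD' (Finset.mem_range.mpr (not_le.mp h))
    have hcl1 : cl x ≤ 1 := (cl_mem x).2
    have : u - D ≤ 0 := by
      have h2 : u ≤ b := by
        have : (b:ℝ) * cl x ≤ (b:ℝ) * 1 := mul_le_mul_of_nonneg_left hcl1 (by positivity)
        simpa using this
      have : (b:ℝ) ≤ D := by exact_mod_cast hbD
      linarith
    rw [cl_of_nonpos this, h₁.1 0 le_rfl, h₂.1 0 le_rfl]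
    ring
  rw [Finset.sum_eq_single D key hside, ← mul_sub, abs_mul, abs_of_nonneg (wt_pos hb D).le]
  have hdd : |F₁ (cl (u - D)) - F₂ (cl (u - D))| ≤ dist F₁ F₂ := by
    rw [← Real.dist_eq]
    exact dist_coe_le_dist _
  have hw := wt_le_half hb D
  have h0 : (0:ℝ) ≤ dist F₁ F₂ := dist_nonneg
  nlinarith [abs_nonneg (F₁ (cl (u - D)) - F₂ (cl (u - D))), (wt_pos hb D).le]

end FP

def clB : ℝ →ᵇ ℝ :=
  ⟨⟨cl, continuous_cl⟩, ⟨1, fun x y => by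
    have hx := cl_mem x; have hy := cl_mem y
    rw [Real.dist_eq, abs_sub_le_iff]
    constructor <;> [skip; skip] <;>
      · simp only [ContinuousMap.coe_mk]
        obtain ⟨a1, a2⟩ := hx; obtain ⟨b1, b2⟩ := hy; linarith⟩⟩

lemma clB_mem : clB ∈ SS := by
  refine ⟨fun x hx => cl_of_nonpos hx, fun x hx => cl_of_one_le hx, cl_mono⟩

lemma exists_F {b : ℕ} (hb : 2 ≤ b) :
    ∃ F : ℝ → ℝ, Continuous F ∧ Monotone F ∧ (∀ x ≤ (0:ℝ), F x = 0) ∧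
      (∀ x, (1:ℝ) ≤ x → F x = 1) ∧
      ∀ d, d < b → ∀ y ∈ Icc (0:ℝ) 1,
        F (((d:ℝ) + y)/b) = (∑ e ∈ Finset.range d, wt b e) + wt b d * F y := by
  haveI : CompleteSpace ↥SS := SS_closed.completeSpace_coe
  haveI : Nonempty ↥SS := ⟨⟨clB, clB_mem⟩⟩
  set G' : ↥SS → ↥SS := fun F => ⟨G b F.1, G_mem hb F.1 F.2⟩ with hG'
  have hL : ContractingWith (1/2 : NNReal) G' := by
    constructor
    · exact_mod_cast (by norm_num : ((1:ℝ)/2) < 1)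
    · apply LipschitzWith.of_dist_le_mul
      intro F₁ F₂
      have := G_contract hb F₁.1 F₂.1 F₁.2 F₂.2
      rw [Subtype.dist_eq, Subtype.dist_eq]
      simpa using this
  set Ffix : ↥SS := ContractingWith.fixedPoint G' hL with hFfix
  have hfixed : G' Ffix = Ffix := hL.fixedPoint_isFixedPt
  obtain ⟨h0, h1, hmono⟩ := Ffix.2
  set F : ℝ → ℝ := ⇑(Ffix.1 : ℝ →ᵇ ℝ) with hF
  have hbcf : G b (Ffix.1) = (Ffix.1 : ℝ →ᵇ ℝ) := congrArg Subtype.val hfixed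
  have hptw : ∀ x : ℝ, F x = ∑ d ∈ Finset.range b, wt b d * F (cl ((b:ℝ) * cl x - d)) := by
    intro x
    have h2 : ((Ffix.1 : ℝ →ᵇ ℝ) : ℝ → ℝ) x = (G b Ffix.1) x := by rw [hbcf]
    exact h2.trans (G_apply b Ffix.1 x)
  have hbR : (0:ℝ) < b := by positivity
  refine ⟨F, Ffix.1.continuous, hmono, h0, h1, ?_⟩
  intro d hd y hy
  obtain ⟨hy0, hy1⟩ := hy
  have hdb : (d:ℝ) + 1 ≤ b := by exact_mod_cast hd
  have hmem : ((d:ℝ) + y)/b ∈ Icc (0:ℝ) 1 := by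
    constructor
    · positivity
    · rw [div_le_one hbR]; linarith
  have hcl : cl (((d:ℝ) + y)/b) = ((d:ℝ) + y)/b := cl_of_mem hmem.1 hmem.2
  have hsimp : ∀ e : ℕ, (b:ℝ) * cl (((d:ℝ) + y)/b) - e = (d:ℝ) + y - e := by
    intro e
    rw [hcl]
    field_simp
  rw [hptw]
  have hxform : ∀ e ∈ Finset.range b, wt b e * F (cl ((b:ℝ) * cl (((d:ℝ) + y)/b) - e))
      = wt b e * F (cl ((d:ℝ) + y - e)) := by
    intro e _
    rw [hsimp e]
  rw [Finset.sum_congr rfl hxform]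
  rw [Finset.range_eq_Ico, ← Finset.sum_Ico_consecutive _ (Nat.zero_le (d+1)) hd]
  have hright : ∑ e ∈ Finset.Ico (d+1) b, wt b e * F (cl ((d:ℝ) + y - e)) = 0 := by
    apply Finset.sum_eq_zero
    intro e he
    have hde : d + 1 ≤ e := (Finset.mem_Ico.mp he).1
    have : (d:ℝ) + 1 ≤ e := by exact_mod_cast hde
    have hcl0 : cl ((d:ℝ) + y - e) = 0 := cl_of_nonpos (by linarith)
    rw [hcl0, h0 0 le_rfl, mul_zero]
  rw [hright, add_zero, Finset.sum_Ico_succ_top (Nat.zero_le d)]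
  have hleft : ∀ e ∈ Finset.Ico 0 d, wt b e * F (cl ((d:ℝ) + y - e)) = wt b e := by
    intro e he
    have hde : e < d := (Finset.mem_Ico.mp he).2
    have : (e:ℝ) + 1 ≤ d := by exact_mod_cast hde
    have hcl1 : cl ((d:ℝ) + y - e) = 1 := cl_of_one_le (by linarith)
    rw [hcl1, h1 1 le_rfl, mul_one]
  rw [Finset.sum_congr rfl hleft]
  have : (d:ℝ) + y - d = y := by ring
  rw [this, cl_of_mem hy0 hy1, ← Finset.range_eq_Ico]

section Fprops
variable {b : ℕ} {F : ℝ → ℝ}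

lemma F_nonneg (hm : Monotone F) (h0 : ∀ x ≤ (0:ℝ), F x = 0) (x : ℝ) : 0 ≤ F x := by
  have h := hm (min_le_left x 0)
  rwa [h0 (min x 0) (min_le_right x 0)] at h

lemma F_le_one (hm : Monotone F) (h1 : ∀ x, (1:ℝ) ≤ x → F x = 1) (x : ℝ) : F x ≤ 1 := by
  have h := hm (le_max_left x 1)
  rwa [h1 (max x 1) (le_max_right x 1)] at h

variable (hb : 2 ≤ b)
  (hself : ∀ d, d < b → ∀ y ∈ Icc (0:ℝ) 1,
    F (((d:ℝ) + y)/b) = (∑ e ∈ Finset.range d, wt b e) + wt b d * F y)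
  (h0 : ∀ x ≤ (0:ℝ), F x = 0) (h1 : ∀ x, (1:ℝ) ≤ x → F x = 1) (hm : Monotone F)

include hb hself h1 in
lemma Wsum_top : ∑ e ∈ Finset.range (b-1), wt b e = 1/2 := by
  have hd : b - 1 < b := by omega
  have h := hself (b-1) hd 1 ⟨by norm_num, le_rfl⟩
  have hcast : ((b-1 : ℕ):ℝ) = (b:ℝ) - 1 := by
    have : (1:ℕ) ≤ b := by omega
    push_cast [this]; ring
  have hbR : (b:ℝ) ≠ 0 := by positivity
  have harg : (((b-1:ℕ):ℝ) + 1)/b = 1 := by rw [hcast]; field_simp; ring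
  rw [harg, h1 1 le_rfl] at h
  have hwt : wt b (b-1) = 1/2 := by unfold wt; simp
  rw [hwt] at h
  linarith

include hb hself h0 h1 in
lemma edge_pow : ∀ i : ℕ, 1 - F (1 - (1/(b:ℝ))^i) = (1/2)^i := by
  have hbR : (0:ℝ) < b := by positivity
  have hb1 : (1:ℝ)/b ≤ 1 := by
    rw [div_le_one hbR]; exact_mod_cast Nat.one_le_of_lt hb
  intro i
  induction i with
  | zero => simp [h0 0 le_rfl]
  | succ i ih =>
    have hpow0 : (0:ℝ) ≤ (1/(b:ℝ))^i := by positivity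
    have hpow1 : (1/(b:ℝ))^i ≤ 1 := pow_le_one₀ (by positivity) hb1
    have hy : (1 - (1/(b:ℝ))^i) ∈ Icc (0:ℝ) 1 := ⟨by linarith, by linarith⟩
    have hd : b - 1 < b := by omega
    have h := hself (b-1) hd _ hy
    have hcast : ((b-1 : ℕ):ℝ) = (b:ℝ) - 1 := by
      have : (1:ℕ) ≤ b := by omega
      push_cast [this]; ring
    have harg : (((b-1:ℕ):ℝ) + (1 - (1/(b:ℝ))^i))/b = 1 - (1/(b:ℝ))^(i+1) := by
      rw [hcast]
      field_simp
      ring_nf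
      rw [mul_inv_cancel₀ hbR.ne', one_mul]
    have hwt : wt b (b-1) = 1/2 := by unfold wt; simp
    rw [harg, Wsum_top hb hself h1, hwt] at h
    rw [h, pow_succ]
    linarith

include hb hself h0 h1 hm in
lemma edge_bound {ε : ℝ} (hε0 : 0 < ε) (hε1 : ε ≤ 1) (hpε : ((1:ℝ)/b) ^ ε ≤ 1/2)
    {u : ℝ} (hu0 : 0 < u) (hu1 : u ≤ 1) :
    (1/(b:ℝ)) * u ^ ε ≤ 1 - F (1 - u) := by
  have hbR : (0:ℝ) < b := by positivity
  have hbinv0 : (0:ℝ) < 1/(b:ℝ) := by positivity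
  have hbinv1 : (1:ℝ)/b < 1 := by
    rw [div_lt_one hbR]; exact_mod_cast hb.trans_lt' one_lt_two
  have hex : ∃ i : ℕ, (1/(b:ℝ))^i ≤ u := by
    obtain ⟨i, hi⟩ := exists_pow_lt_of_lt_one hu0 hbinv1
    exact ⟨i, hi.le⟩
  classical
  obtain ⟨i, hfind, hmin⟩ : ∃ i : ℕ, (1/(b:ℝ))^i ≤ u ∧ ∀ j < i, u < (1/(b:ℝ))^j :=
    ⟨Nat.find hex, Nat.find_spec hex, fun j hj => by
      have := Nat.find_min hex hj
      linarith [not_le.mp this]⟩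
  have step1 : (1:ℝ)/2 ^ i ≤ 1 - F (1 - u) := by
    have h2 : F (1 - u) ≤ F (1 - (1/(b:ℝ))^i) := hm (by linarith)
    have h3 := edge_pow hb hself h0 h1 i
    have : ((1:ℝ)/2)^i = 1/2^i := by rw [div_pow, one_pow]
    linarith [this ▸ h3]
  have step2 : ((1/(b:ℝ))^i : ℝ) ^ ε ≤ ((1:ℝ)/2)^i := by
    calc ((1/(b:ℝ))^i : ℝ) ^ ε = (((1:ℝ)/b) ^ ε)^i := by
          rw [← Real.rpow_natCast ((1/(b:ℝ))^ε) i, ← Real.rpow_natCast (1/(b:ℝ)) i,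
            ← Real.rpow_mul hbinv0.le, ← Real.rpow_mul hbinv0.le, mul_comm]
      _ ≤ ((1:ℝ)/2)^i := pow_le_pow_left₀ (Real.rpow_nonneg hbinv0.le ε) hpε i
  have step3 : (1/(b:ℝ)) * u ^ ε ≤ ((1/(b:ℝ))^i : ℝ) ^ ε := by
    rcases Nat.eq_zero_or_pos i with h | h
    · rw [h]
      simp only [pow_zero, Real.one_rpow]
      have hue : u ^ ε ≤ 1 := Real.rpow_le_one hu0.le hu1 hε0.le
      nlinarith
    · obtain ⟨j, hij⟩ : ∃ j, i = j + 1 := ⟨i - 1, by omega⟩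
      rw [hij]
      have hj := hmin j (by omega)
      have h4 : u ^ ε ≤ ((1/(b:ℝ))^j) ^ ε :=
        Real.rpow_le_rpow hu0.le hj.le hε0.le
      have h5 : (1:ℝ)/b ≤ ((1:ℝ)/b) ^ ε := by
        have := Real.rpow_le_rpow_of_exponent_ge hbinv0 hbinv1.le hε1
        rwa [Real.rpow_one] at this
      calc (1/(b:ℝ)) * u ^ ε ≤ ((1:ℝ)/b) ^ ε * ((1/(b:ℝ))^j) ^ ε := by
            apply mul_le_mul h5 h4 (Real.rpow_nonneg hu0.le ε) (Real.rpow_nonneg hbinv0.le ε)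
        _ = ((1/(b:ℝ))^(j+1)) ^ ε := by
            rw [← Real.mul_rpow hbinv0.le (by positivity), pow_succ]
            ring_nf
  have : ((1:ℝ)/2)^i = 1/2^i := by rw [div_pow, one_pow]
  linarith [this ▸ step2]

end Fprops

section Main
variable {b m : ℕ} {F : ℝ → ℝ} {ε : ℝ}

set_option maxHeartbeats 2000000 in
theorem main_ind (hm1 : 1 ≤ m) (hbm : b = 2^m) (hb : 2 ≤ b)
    (hself : ∀ d, d < b → ∀ y ∈ Icc (0:ℝ) 1,
      F (((d:ℝ) + y)/b) = (∑ e ∈ Finset.range d, wt b e) + wt b d * F y)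
    (h0 : ∀ x ≤ (0:ℝ), F x = 0) (h1 : ∀ x, (1:ℝ) ≤ x → F x = 1) (hm : Monotone F)
    (hε0 : 0 < ε) (hε1 : ε ≤ 1) (hpε : ((1:ℝ)/b) ^ ε ≤ 1/2) :
    ∀ n k : ℕ, k < 2^n → ∀ δ : ℝ, δ ∈ Ioo (0:ℝ) 1 →
      1/(2*((b:ℝ)-1)*b) * δ^ε *
          (F (((k:ℝ)+1)*(1/2)^n) - F ((k:ℝ)*(1/2)^n)) ≤
        F (min (((k:ℝ)+1/2)*(1/2)^n + δ*(1/2)^n) (((k:ℝ)+1)*(1/2)^n))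
          - F (max (((k:ℝ)+1/2)*(1/2)^n - δ*(1/2)^n) ((k:ℝ)*(1/2)^n)) := by
  have hbR0 : (0:ℝ) < b := by positivity
  have hbR2 : (2:ℝ) ≤ b := by exact_mod_cast hb
  have hb0 : (b:ℝ) ≠ 0 := ne_of_gt hbR0
  have hq0 : (0:ℝ) < 1/(2*((b:ℝ)-1)) := by
    have : (1:ℝ) ≤ (b:ℝ) - 1 := by linarith
    positivity
  intro n
  induction n using Nat.strong_induction_on with
  | _ n IH =>
    intro k hk δ hδ
    obtain ⟨hδ0, hδ1⟩ := hδ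
    have hδε0 : 0 < δ ^ ε := Real.rpow_pos_of_pos hδ0 ε
    by_cases hnm : n < m
    · -- base case
      obtain ⟨j, hmj⟩ : ∃ j, m = n + j + 1 := ⟨m - n - 1, by omega⟩
      subst hmj
      set s : ℕ := k * 2^(j+1) + 2^j with hs
      clear_value s
      have h2j : 1 ≤ 2^j := Nat.one_le_two_pow
      have hs1 : 1 ≤ s := by rw [hs]; exact h2j.trans (Nat.le_add_left _ _)
      have hsb : s ≤ b := by
        have hk' : k + 1 ≤ 2^n := hk
        have h2 : (2:ℕ)^j ≤ 2^(j+1) := Nat.pow_le_pow_right (by norm_num) (by omega)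
        calc s = k*2^(j+1) + 2^j := hs
          _ ≤ k*2^(j+1) + 2^(j+1) := Nat.add_le_add_left h2 _
          _ = (k+1)*2^(j+1) := by ring
          _ ≤ 2^n * 2^(j+1) := Nat.mul_le_mul_right _ hk'
          _ = 2^(n+j+1) := by rw [← pow_add]; ring_nf
          _ = b := hbm.symm
      set d : ℕ := s - 1 with hdef
      clear_value d
      have hdb : d < b := by omega
      have hcast_d : (d:ℝ) = (k:ℝ)*2^(j+1) + 2^j - 1 := by
        rw [hdef, Nat.cast_sub hs1, hs]
        push_cast
        ring
      have hcast_b : (b:ℝ) = 2^(n+j+1) := by rw [hbm]; push_cast; ring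
      have hEq : (2:ℝ)^n * (1/2:ℝ)^n = 1 := by rw [← mul_pow]; norm_num
      have hh0 : (0:ℝ) < (1/2:ℝ)^n := by positivity
      have hbh : (b:ℝ) * (1/2:ℝ)^n = 2^(j+1) := by
        rw [hcast_b]
        have hsplit : (2:ℝ)^(n+j+1) = 2^n * 2^(j+1) := by
          rw [show n+j+1 = n+(j+1) by ring, pow_add]
        rw [hsplit]
        linear_combination (2:ℝ)^(j+1) * hEq
      have h2j1 : (2:ℝ) ≤ 2^(j+1) := by
        calc (2:ℝ) = 2^1 := (pow_one 2).symm
          _ ≤ 2^(j+1) := by apply pow_le_pow_right₀ (by norm_num) (by omega)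
      -- key identity : the midpoint is (d+1)/b
      have hkey : ((k:ℝ)+1/2)*(1/2:ℝ)^n = ((d:ℝ) + 1)/b := by
        rw [hcast_d, eq_div_iff hb0]
        have h' : ((k:ℝ)+1/2)*(1/2:ℝ)^n*b = ((k:ℝ)+1/2)*((b:ℝ)*(1/2:ℝ)^n) := by ring
        rw [h', hbh]
        have h2 : (2:ℝ)^(j+1) = 2*2^j := by rw [pow_succ]; ring
        rw [h2]; ring
      set v : ℝ := min (δ*(1/2:ℝ)^n) (1/(b:ℝ)) with hv
      clear_value v
      have hv0 : 0 < v := by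
        rw [hv]; exact lt_min (by positivity) (by positivity)
      have hvb : v ≤ 1/(b:ℝ) := by rw [hv]; exact min_le_right _ _
      have hvδ : v ≤ δ*(1/2:ℝ)^n := by rw [hv]; exact min_le_left _ _
      have hvh : v ≤ (1/2:ℝ)^n/2 := by
        have hble : (1:ℝ)/b ≤ (1/2:ℝ)^n/2 := by
          rw [div_le_div_iff₀ hbR0 (by norm_num)]
          have hbb : (2:ℝ) ≤ (b:ℝ) * (1/2:ℝ)^n := by rw [hbh]; exact h2j1
          nlinarith
        linarith
      set u : ℝ := (b:ℝ) * v with hu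
      clear_value u
      have hu0 : 0 < u := by rw [hu]; positivity
      have hu1 : u ≤ 1 := by
        rw [hu]
        calc (b:ℝ) * v ≤ (b:ℝ) * (1/b) := mul_le_mul_of_nonneg_left hvb hbR0.le
          _ = 1 := by field_simp
      have huδ : δ ≤ u := by
        rw [hu, hv, mul_min_of_nonneg _ _ hbR0.le]
        apply le_min
        · have h' : (b:ℝ)*(δ*(1/2:ℝ)^n) = δ*((b:ℝ)*(1/2:ℝ)^n) := by ring
          rw [h', hbh]
          nlinarith
        · have h' : (b:ℝ) * (1/b) = 1 := by field_simp
          rw [h']; exact hδ1.le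
      -- the two self-similar evaluations
      have hself1 : F (((k:ℝ)+1/2)*(1/2:ℝ)^n)
          = (∑ e ∈ Finset.range d, wt b e) + wt b d := by
        have h' := hself d hdb 1 ⟨by norm_num, le_rfl⟩
        rw [h1 1 le_rfl, mul_one] at h'
        rw [hkey]
        exact h'
      have hself2 : F (((k:ℝ)+1/2)*(1/2:ℝ)^n - v)
          = (∑ e ∈ Finset.range d, wt b e) + wt b d * F (1 - u) := by
        have hy : (1 - u) ∈ Icc (0:ℝ) 1 := ⟨by linarith, by linarith⟩
        have h' := hself d hdb (1-u) hy
        have harg : ((d:ℝ) + (1 - u))/b = ((k:ℝ)+1/2)*(1/2:ℝ)^n - v := by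
          rw [hu, hkey]
          field_simp
          ring
        rw [harg] at h'
        exact h'
      -- monotonicity reductions
      have hδh0 : 0 < δ*(1/2:ℝ)^n := by positivity
      have hhalf : (((k:ℝ)+1)*(1/2:ℝ)^n) - (((k:ℝ)+1/2)*(1/2:ℝ)^n) = (1/2:ℝ)^n/2 := by ring
      have hhalf2 : (((k:ℝ)+1/2)*(1/2:ℝ)^n) - ((k:ℝ)*(1/2:ℝ)^n) = (1/2:ℝ)^n/2 := by ring
      have hmono1 : F (((k:ℝ)+1/2)*(1/2:ℝ)^n)
          ≤ F (min (((k:ℝ)+1/2)*(1/2)^n + δ*(1/2)^n) (((k:ℝ)+1)*(1/2)^n)) := by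
        apply hm
        apply le_min
        · linarith
        · linarith
      have hmono2 : F (max (((k:ℝ)+1/2)*(1/2)^n - δ*(1/2)^n) ((k:ℝ)*(1/2)^n))
          ≤ F (((k:ℝ)+1/2)*(1/2:ℝ)^n - v) := by
        apply hm
        apply max_le
        · linarith
        · linarith
      -- edge bound
      have hedge := edge_bound hb hself h0 h1 hm hε0 hε1 hpε hu0 hu1
      have hA0 : 0 ≤ 1 - F (1 - u) := by
        have := F_le_one hm h1 (1 - u)
        linarith
      have huε : δ^ε ≤ u^ε := Real.rpow_le_rpow hδ0.le huδ hε0.le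
      have hFd : F (((k:ℝ)+1)*(1/2:ℝ)^n) - F ((k:ℝ)*(1/2:ℝ)^n) ≤ 1 := by
        have := F_le_one hm h1 (((k:ℝ)+1)*(1/2:ℝ)^n)
        have := F_nonneg hm h0 ((k:ℝ)*(1/2:ℝ)^n)
        linarith
      have hcv : F (((k:ℝ)+1/2)*(1/2:ℝ)^n) - F (((k:ℝ)+1/2)*(1/2:ℝ)^n - v)
          = wt b d * (1 - F (1 - u)) := by
        rw [hself1, hself2]; ring
      have hq_wt := q_le_wt hb d
      have hC0 : (0:ℝ) < 1/(2*((b:ℝ)-1)*b) := by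
        have h1b : (1:ℝ) ≤ (b:ℝ) - 1 := by linarith
        positivity
      calc 1/(2*((b:ℝ)-1)*b) * δ^ε * (F (((k:ℝ)+1)*(1/2)^n) - F ((k:ℝ)*(1/2)^n))
          ≤ 1/(2*((b:ℝ)-1)*b) * δ^ε * 1 := by
            apply mul_le_mul_of_nonneg_left hFd (mul_pos hC0 hδε0).le
        _ = (1/(2*((b:ℝ)-1))) * ((1/b) * δ^ε) := by
            field_simp
        _ ≤ (1/(2*((b:ℝ)-1))) * ((1/b) * u^ε) := by
            apply mul_le_mul_of_nonneg_left _ hq0.le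
            apply mul_le_mul_of_nonneg_left huε (by positivity)
        _ ≤ (1/(2*((b:ℝ)-1))) * (1 - F (1 - u)) := by
            apply mul_le_mul_of_nonneg_left hedge hq0.le
        _ ≤ wt b d * (1 - F (1 - u)) := by
            apply mul_le_mul_of_nonneg_right hq_wt hA0
        _ = F (((k:ℝ)+1/2)*(1/2:ℝ)^n) - F (((k:ℝ)+1/2)*(1/2:ℝ)^n - v) := hcv.symm
        _ ≤ F (min (((k:ℝ)+1/2)*(1/2)^n + δ*(1/2)^n) (((k:ℝ)+1)*(1/2)^n))
            - F (max (((k:ℝ)+1/2)*(1/2)^n - δ*(1/2)^n) ((k:ℝ)*(1/2)^n)) := by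
            linarith
    · -- inductive case : n ≥ m
      push_neg at hnm
      obtain ⟨n', rfl⟩ : ∃ n', n = n' + m := ⟨n - m, by omega⟩
      have hlt : n' < n' + m := by omega
      have h2n'0 : (0:ℕ) < 2^n' := Nat.pow_pos (by norm_num)
      have hdb : k / 2^n' < b := by
        rw [Nat.div_lt_iff_lt_mul h2n'0, hbm]
        calc k < 2^(n'+m) := hk
          _ = 2^m * 2^n' := by rw [pow_add]; ring
      set d : ℕ := k / 2^n' with hdd
      set k₀ : ℕ := k % 2^n' with hk₀d
      clear_value d k₀
      have hk₀ : k₀ < 2^n' := by rw [hk₀d]; exact Nat.mod_lt _ h2n'0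
      have hkR : (k:ℝ) = (d:ℝ)*2^n' + k₀ := by
        have hkeq : 2^n' * d + k₀ = k := by rw [hdd, hk₀d]; exact Nat.div_add_mod k (2^n')
        rw [← hkeq]; push_cast; ring
      have hbcast : (b:ℝ) = 2^m := by rw [hbm]; push_cast; ring
      have hinv' : (2:ℝ)^n' * (1/2:ℝ)^n' = 1 := by rw [← mul_pow]; norm_num
      have hppow : ((1:ℝ)/2)^(n'+m) = (1/2:ℝ)^n' * (1/2:ℝ)^m := pow_add _ _ _
      have hdiv : ∀ x : ℝ, x / (b:ℝ) = x * (1/2:ℝ)^m := by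
        intro x
        rw [hbcast, div_pow, one_pow, mul_one_div]
      have IH' := IH n' hlt k₀ hk₀ δ ⟨hδ0, hδ1⟩
      have hk₀R : (k₀:ℝ) + 1 ≤ 2^n' := by exact_mod_cast hk₀
      have hp0 : (0:ℝ) < (1/2:ℝ)^n' := by positivity
      have hkh1 : ((k₀:ℝ)+1) * (1/2:ℝ)^n' ≤ 1 := by nlinarith [mul_le_mul_of_nonneg_right hk₀R hp0.le, hinv']
      have hy1m : (k₀:ℝ)*(1/2:ℝ)^n' ∈ Icc (0:ℝ) 1 :=
        ⟨by positivity, by nlinarith [hkh1, hp0]⟩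
      have hy2m : ((k₀:ℝ)+1)*(1/2:ℝ)^n' ∈ Icc (0:ℝ) 1 := ⟨by positivity, hkh1⟩
      have hyAm : max (((k₀:ℝ)+1/2)*(1/2:ℝ)^n' - δ*(1/2:ℝ)^n') ((k₀:ℝ)*(1/2:ℝ)^n')
          ∈ Icc (0:ℝ) 1 := by
        constructor
        · exact le_trans hy1m.1 (le_max_right _ _)
        · apply max_le
          · nlinarith [hkh1, mul_pos hδ0 hp0]
          · exact hy1m.2
      have hyBm : min (((k₀:ℝ)+1/2)*(1/2:ℝ)^n' + δ*(1/2:ℝ)^n') (((k₀:ℝ)+1)*(1/2:ℝ)^n')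
          ∈ Icc (0:ℝ) 1 := by
        constructor
        · apply le_min
          · nlinarith [hy1m.1, mul_pos hδ0 hp0, hp0]
          · exact hy2m.1
        · exact le_trans (min_le_right _ _) hy2m.2
      -- point identities
      have e1 : (k:ℝ)*(1/2)^(n'+m) = ((d:ℝ) + (k₀:ℝ)*(1/2:ℝ)^n')/b := by
        rw [hkR, hppow, hdiv]
        linear_combination ((d:ℝ)*(1/2:ℝ)^m) * hinv'
      have e2 : ((k:ℝ)+1)*(1/2)^(n'+m) = ((d:ℝ) + ((k₀:ℝ)+1)*(1/2:ℝ)^n')/b := by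
        rw [hkR, hppow, hdiv]
        linear_combination ((d:ℝ)*(1/2:ℝ)^m) * hinv'
      have ec : ∀ t : ℝ, ((k:ℝ)+1/2)*(1/2)^(n'+m) + t*(1/2)^(n'+m)
          = ((d:ℝ) + (((k₀:ℝ)+1/2)*(1/2:ℝ)^n' + t*(1/2:ℝ)^n'))/b := by
        intro t
        rw [hkR, hppow, hdiv]
        linear_combination ((d:ℝ)*(1/2:ℝ)^m) * hinv'
      have eA : max (((k:ℝ)+1/2)*(1/2)^(n'+m) - δ*(1/2)^(n'+m)) ((k:ℝ)*(1/2)^(n'+m))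
          = ((d:ℝ) + max (((k₀:ℝ)+1/2)*(1/2:ℝ)^n' - δ*(1/2:ℝ)^n') ((k₀:ℝ)*(1/2:ℝ)^n'))/b := by
        have hsub : ((k:ℝ)+1/2)*(1/2)^(n'+m) - δ*(1/2)^(n'+m)
            = ((d:ℝ) + (((k₀:ℝ)+1/2)*(1/2:ℝ)^n' - δ*(1/2:ℝ)^n'))/b := by
          have h' := ec (-δ)
          rw [show ((k:ℝ)+1/2)*(1/2)^(n'+m) - δ*(1/2)^(n'+m)
            = ((k:ℝ)+1/2)*(1/2)^(n'+m) + (-δ)*(1/2)^(n'+m) by ring, h']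
          ring_nf
        rw [hsub, e1, max_div_div_right hbR0.le, max_add_add_left]
      have eB : min (((k:ℝ)+1/2)*(1/2)^(n'+m) + δ*(1/2)^(n'+m)) (((k:ℝ)+1)*(1/2)^(n'+m))
          = ((d:ℝ) + min (((k₀:ℝ)+1/2)*(1/2:ℝ)^n' + δ*(1/2:ℝ)^n') (((k₀:ℝ)+1)*(1/2:ℝ)^n'))/b := by
        rw [ec δ, e2, min_div_div_right hbR0.le, min_add_add_left]
      rw [eA, eB, e1, e2, hself d hdb _ hy1m, hself d hdb _ hy2m,
        hself d hdb _ hyAm, hself d hdb _ hyBm]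
      nlinarith [mul_le_mul_of_nonneg_left IH' (wt_pos hb d).le]

end Main

end AuxSelfSimilar

set_option maxHeartbeats 2000000 in
/-- existence of a measure giving mass `≳ δ^ε` to central
sub-intervals of dyadic intervals. -/
theorem stmt_8 :
    ∀ ε ∈ Set.Ioo (0 : ℝ) 1,
      ∃ (μ : Measure ℝ) (C : ℝ), IsProbabilityMeasure μ ∧ μ (Icc (0 : ℝ) 1) = 1 ∧ 0 < C ∧
        ∀ (n k : ℕ), k < 2 ^ n → ∀ δ ∈ Set.Ioo (0 : ℝ) 1,
          C * δ ^ ε * (μ (Icc ((k : ℝ) * 2 ^ (-(n : ℤ))) ((k + 1 : ℝ) * 2 ^ (-(n : ℤ))))).toReal ≤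
            (μ (Icc ((k + 1 / 2 : ℝ) * 2 ^ (-(n : ℤ)) - δ * 2 ^ (-(n : ℤ)))
                ((k + 1 / 2 : ℝ) * 2 ^ (-(n : ℤ)) + δ * 2 ^ (-(n : ℤ))) ∩ Icc 0 1)).toReal := by
  intro ε hε
  obtain ⟨hε0, hε1⟩ := hε
  -- choose the base
  set m : ℕ := ⌈1/ε⌉₊ with hmdef
  have hm1 : 1 ≤ m := by
    rw [hmdef]
    exact Nat.one_le_iff_ne_zero.mpr (by
      have : (0:ℝ) < 1/ε := by positivity
      exact Nat.ceil_pos.mpr this |>.ne')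
  set b : ℕ := 2^m with hbdef
  have hb : 2 ≤ b := by
    calc 2 = 2^1 := (pow_one 2).symm
      _ ≤ 2^m := Nat.pow_le_pow_right (by norm_num) hm1
  have hbR0 : (0:ℝ) < b := by positivity
  have hmε : 1 ≤ (m:ℝ) * ε := by
    have h1 : (1:ℝ)/ε ≤ m := Nat.le_ceil _
    have := mul_le_mul_of_nonneg_right h1 hε0.le
    rwa [one_div, inv_mul_cancel₀ (ne_of_gt hε0)] at this
  have hpε : ((1:ℝ)/b) ^ ε ≤ 1/2 := by
    have hb2 : ((1:ℝ)/b) = (1/2:ℝ)^m := by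
      rw [hbdef]
      push_cast
      rw [div_pow, one_pow]
    rw [hb2]
    have h3 : ((1/2:ℝ)^m : ℝ) ^ ε = (1/2:ℝ) ^ ((m:ℝ) * ε) := by
      rw [← Real.rpow_natCast (1/2:ℝ) m, ← Real.rpow_mul (by norm_num)]
    rw [h3]
    calc (1/2:ℝ) ^ ((m:ℝ)*ε) ≤ (1/2:ℝ) ^ (1:ℝ) :=
          Real.rpow_le_rpow_of_exponent_ge (by norm_num) (by norm_num) hmε
      _ = 1/2 := Real.rpow_one _
  obtain ⟨F, hFcont, hFmono, hF0, hF1, hFself⟩ := exists_F hb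
  -- the Stieltjes measure associated to F
  set Sf : StieltjesFunction ℝ :=
    ⟨F, hFmono, fun x => (hFcont.continuousAt).continuousWithinAt⟩ with hSf
  set μ : Measure ℝ := Sf.measure with hμ
  have hleft : ∀ a : ℝ, Function.leftLim F a = F a := fun a =>
    leftLim_eq_of_tendsto ((hFcont.tendsto a).mono_left nhdsWithin_le_nhds)
  have hIcc : ∀ a c : ℝ, μ (Icc a c) = ENNReal.ofReal (F c - F a) := by
    intro a c
    rw [hμ, Sf.measure_Icc]
    congr 1
    rw [hleft]
  have hprob : IsProbabilityMeasure μ := by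
    constructor
    have hbot : Filter.Tendsto F Filter.atBot (nhds 0) := by
      apply Filter.Tendsto.congr' _ tendsto_const_nhds
      filter_upwards [Filter.eventually_le_atBot (0:ℝ)] with x hx
      exact (hF0 x hx).symm
    have htop : Filter.Tendsto F Filter.atTop (nhds 1) := by
      apply Filter.Tendsto.congr' _ tendsto_const_nhds
      filter_upwards [Filter.eventually_ge_atTop (1:ℝ)] with x hx
      exact (hF1 x hx).symm
    rw [hμ, Sf.measure_univ hbot htop]
    norm_num
  have hIcc01 : μ (Icc (0:ℝ) 1) = 1 := by
    rw [hIcc 0 1, hF1 1 le_rfl, hF0 0 le_rfl]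
    norm_num
  refine ⟨μ, 1/(2*((b:ℝ)-1)*b), hprob, hIcc01, ?_, ?_⟩
  · have : (1:ℝ) ≤ (b:ℝ) - 1 := by
      have : (2:ℝ) ≤ b := by exact_mod_cast hb
      linarith
    positivity
  intro n k hk δ hδ
  obtain ⟨hδ0, hδ1⟩ := hδ
  have hzp : (2:ℝ) ^ (-(n:ℤ)) = (1/2:ℝ)^n := by
    rw [zpow_neg, zpow_natCast, div_pow, one_pow]
    rw [one_div]
  rw [hzp]
  have hp0 : (0:ℝ) < (1/2:ℝ)^n := by positivity
  have hinv : (2:ℝ)^n * (1/2:ℝ)^n = 1 := by rw [← mul_pow]; norm_num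
  have hkn : (k:ℝ) + 1 ≤ 2^n := by exact_mod_cast hk
  -- the value of μ on the dyadic interval
  have hle : (k:ℝ)*(1/2:ℝ)^n ≤ ((k:ℝ)+1)*(1/2:ℝ)^n := by nlinarith
  have hval : (μ (Icc ((k:ℝ)*(1/2:ℝ)^n) (((k:ℝ)+1)*(1/2:ℝ)^n))).toReal
      = F (((k:ℝ)+1)*(1/2:ℝ)^n) - F ((k:ℝ)*(1/2:ℝ)^n) := by
    rw [hIcc, ENNReal.toReal_ofReal (sub_nonneg.mpr (hFmono hle))]
  -- the comparison subinterval
  set A : ℝ := max (((k:ℝ)+1/2)*(1/2:ℝ)^n - δ*(1/2:ℝ)^n) ((k:ℝ)*(1/2:ℝ)^n) with hA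
  set B : ℝ := min (((k:ℝ)+1/2)*(1/2:ℝ)^n + δ*(1/2:ℝ)^n) (((k:ℝ)+1)*(1/2:ℝ)^n) with hB
  have hAc : A ≤ ((k:ℝ)+1/2)*(1/2:ℝ)^n := by
    rw [hA]
    apply max_le
    · nlinarith
    · nlinarith
  have hcB : ((k:ℝ)+1/2)*(1/2:ℝ)^n ≤ B := by
    rw [hB]
    apply le_min
    · nlinarith
    · nlinarith
  have hAB : A ≤ B := le_trans hAc hcB
  have hsub : Icc A B ⊆
      Icc (((k:ℝ)+1/2)*(1/2:ℝ)^n - δ*(1/2:ℝ)^n) (((k:ℝ)+1/2)*(1/2:ℝ)^n + δ*(1/2:ℝ)^n)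
        ∩ Icc 0 1 := by
    intro x hx
    obtain ⟨hx1, hx2⟩ := hx
    constructor
    · constructor
      · exact le_trans (le_max_left _ _) hx1
      · exact le_trans hx2 (min_le_left _ _)
    · constructor
      · have : (0:ℝ) ≤ (k:ℝ)*(1/2:ℝ)^n := by positivity
        exact le_trans (this.trans (le_max_right _ _)) hx1
      · have hr : ((k:ℝ)+1)*(1/2:ℝ)^n ≤ 1 := by nlinarith
        exact le_trans hx2 ((min_le_right _ _).trans hr)
  have hmono := measure_mono (μ := μ) hsub
  have hABval : (μ (Icc A B)).toReal = F B - F A := by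
    rw [hIcc, ENNReal.toReal_ofReal (sub_nonneg.mpr (hFmono hAB))]
  have hfin : (μ (Icc A B)).toReal ≤
      (μ (Icc (((k:ℝ)+1/2)*(1/2:ℝ)^n - δ*(1/2:ℝ)^n) (((k:ℝ)+1/2)*(1/2:ℝ)^n + δ*(1/2:ℝ)^n)
        ∩ Icc 0 1)).toReal :=
    ENNReal.toReal_mono (measure_ne_top μ _) hmono
  have hmain := main_ind hm1 hbdef hb hFself hF0 hF1 hFmono hε0 hε1.le hpε n k hk δ ⟨hδ0, hδ1⟩
  rw [hval]
  rw [hABval] at hfin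
  calc 1/(2*((b:ℝ)-1)*b) * δ^ε * (F (((k:ℝ)+1)*(1/2:ℝ)^n) - F ((k:ℝ)*(1/2:ℝ)^n))
      ≤ F B - F A := hmain
    _ ≤ _ := hfin
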